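/- Fix t ≥ 1, λ > 0, r_{t−1} ∈ ℝ, a nonempty compact polyhedron X = {x : Ax ≥ b}, PSD matrix Q_t, and vectors c_t, y_t. Suppose for each r in a compact interval [0,R] the set S(r) = S(Q_t,c_t,A,b;r) is nonempty. Then the update problem min_{r ∈ [0,R]} (1/2)(r − r_{t−1})² + (λ/√t)·min_{x ∈ S(r)}‖y_t − x‖² attains its minimum. -/
import Mathlib


open Matrix Set Finset

/-- Existence of the online inverse-optimization update: the proximal objective
`(1/2)(r - r_{t-1})² + (λ/√t)·min_{x ∈ S(r)} ‖y_t - x‖²` attains its minimum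
over the compact interval `[0, R]`. -/
theorem stmt_17 {n m : ℕ} (t : ℕ) (ht : 1 ≤ t) (lam : ℝ) (hlam : 0 < lam)
    (rprev : ℝ) (Qt : Matrix (Fin n) (Fin n) ℝ) (hQ : Qt.PosSemidef)
    (A : Matrix (Fin m) (Fin n) ℝ) (b : Fin m → ℝ)
    (X : Set (Fin n → ℝ)) (hXdef : X = {x | ∀ i, b i ≤ (A *ᵥ x) i})
    (hne : X.Nonempty) (hcpt : IsCompact X)
    (ct : Fin n → ℝ) (yt : Fin n → ℝ) (R : ℝ) (hR : 0 ≤ R)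
    (S : ℝ → Set (Fin n → ℝ))
    (hSdef : ∀ r, S r = {x ∈ X | ∀ z ∈ X,
      (1 / 2) * (x ⬝ᵥ (Qt *ᵥ x)) - r * (ct ⬝ᵥ x) ≤
        (1 / 2) * (z ⬝ᵥ (Qt *ᵥ z)) - r * (ct ⬝ᵥ z)})
    (hSne : ∀ r ∈ Set.Icc (0 : ℝ) R, (S r).Nonempty) :
    ∃ r₀ ∈ Set.Icc (0 : ℝ) R, ∀ r ∈ Set.Icc (0 : ℝ) R,
      (1 / 2) * (r₀ - rprev) ^ 2 +
          (lam / Real.sqrt t) *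
            sInf ((fun x : Fin n → ℝ => ∑ i, (yt i - x i) ^ 2) '' S r₀) ≤
        (1 / 2) * (r - rprev) ^ 2 +
          (lam / Real.sqrt t) *
            sInf ((fun x : Fin n → ℝ => ∑ i, (yt i - x i) ^ 2) '' S r) := by
  classical
  set h : (Fin n → ℝ) → ℝ := fun x => ∑ i, (yt i - x i) ^ 2 with hh
  set K : Set ℝ := Set.Icc (0 : ℝ) R with hK
  set c : ℝ := lam / Real.sqrt t with hcdef
  have htpos : (0 : ℝ) < (t : ℝ) := by exact_mod_cast Nat.lt_of_lt_of_le Nat.zero_lt_one ht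
  have hc : 0 < c := div_pos hlam (Real.sqrt_pos.mpr htpos)
  -- continuity facts
  have cont_dot : ∀ v : Fin n → ℝ, Continuous fun x : Fin n → ℝ => v ⬝ᵥ x := by
    intro v
    simp only [dotProduct]
    exact continuous_finset_sum _ fun i _ => continuous_const.mul (continuous_apply i)
  have cont_quad : Continuous fun x : Fin n → ℝ => x ⬝ᵥ (Qt *ᵥ x) := by
    simp only [dotProduct, mulVec]
    exact continuous_finset_sum _ fun i _ => (continuous_apply i).mul
      (continuous_finset_sum _ fun j _ => continuous_const.mul (continuous_apply j))
  have cont_h : Continuous h := by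
    exact continuous_finset_sum _ fun i _ => (continuous_const.sub (continuous_apply i)).pow 2
  have h_nonneg : ∀ x, 0 ≤ h x := fun x => Finset.sum_nonneg fun i _ => sq_nonneg _
  -- S r is compact
  have hSsub : ∀ r, S r ⊆ X := by
    intro r x hx; rw [hSdef] at hx; exact hx.1
  have hScpt : ∀ r, IsCompact (S r) := by
    intro r
    refine hcpt.of_isClosed_subset ?_ (hSsub r)
    have : S r = X ∩ ⋂ z ∈ X, {x : Fin n → ℝ |
        (1 / 2) * (x ⬝ᵥ (Qt *ᵥ x)) - r * (ct ⬝ᵥ x) ≤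
          (1 / 2) * (z ⬝ᵥ (Qt *ᵥ z)) - r * (ct ⬝ᵥ z)} := by
      rw [hSdef]; ext x; simp [Set.mem_iInter]
    rw [this]
    refine hcpt.isClosed.inter (isClosed_biInter fun z hz => ?_)
    exact isClosed_le ((continuous_const.mul cont_quad).sub
      (continuous_const.mul (cont_dot ct))) continuous_const
  have hbdd : ∀ r, BddBelow (h '' S r) := by
    intro r
    exact ⟨0, fun a ⟨x, _, hx⟩ => hx ▸ h_nonneg x⟩
  -- the minimum over S r is attained
  have hatt : ∀ r ∈ K, ∃ x ∈ S r, sInf (h '' S r) = h x := by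
    intro r hr
    exact (hScpt r).exists_sInf_image_eq (hSne r hr) cont_h.continuousOn
  -- objective
  set F : ℝ → ℝ := fun r => (1 / 2) * (r - rprev) ^ 2 + c * sInf (h '' S r) with hF
  have hFnonneg : ∀ r ∈ K, 0 ≤ F r := by
    intro r hr
    obtain ⟨x, hxS, hx⟩ := hatt r hr
    have : 0 ≤ sInf (h '' S r) := hx ▸ h_nonneg x
    positivity
  have hKne : K.Nonempty := ⟨0, ⟨le_rfl, hR⟩⟩
  have hFimne : (F '' K).Nonempty := hKne.image F
  have hFimbdd : BddBelow (F '' K) := ⟨0, fun a ⟨r, hr, hra⟩ => hra ▸ hFnonneg r hr⟩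
  set μ : ℝ := sInf (F '' K) with hμ
  obtain ⟨u, -, hu_tendsto, hu_mem⟩ := exists_seq_tendsto_sInf hFimne hFimbdd
  choose rk hrkK hrkF using hu_mem
  have hFrk : Filter.Tendsto (fun k => F (rk k)) Filter.atTop (nhds μ) :=
    hu_tendsto.congr fun k => (hrkF k).symm
  obtain ⟨r₀, hr₀K, ψ, hψmono, hrψ⟩ := isCompact_Icc.tendsto_subseq hrkK
  have hFrψ : Filter.Tendsto (fun k => F (rk (ψ k))) Filter.atTop (nhds μ) :=
    hFrk.comp hψmono.tendsto_atTop
  -- minimizers along the subsequence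
  have hx : ∀ k, ∃ x ∈ S (rk (ψ k)), sInf (h '' S (rk (ψ k))) = h x :=
    fun k => hatt _ (hrkK (ψ k))
  choose xk hxkS hxkInf using hx
  have hxkX : ∀ k, xk k ∈ X := fun k => hSsub _ (hxkS k)
  obtain ⟨xL, hxLX, ρ, hρmono, hxρ⟩ := hcpt.tendsto_subseq hxkX
  have hrσ : Filter.Tendsto (fun k => rk (ψ (ρ k))) Filter.atTop (nhds r₀) :=
    hrψ.comp hρmono.tendsto_atTop
  have hFσ : Filter.Tendsto (fun k => F (rk (ψ (ρ k)))) Filter.atTop (nhds μ) :=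
    hFrψ.comp hρmono.tendsto_atTop
  have hxσ : Filter.Tendsto (fun k => xk (ρ k)) Filter.atTop (nhds xL) := hxρ
  have hhxσ : Filter.Tendsto (fun k => h (xk (ρ k))) Filter.atTop (nhds (h xL)) :=
    (cont_h.tendsto xL).comp hxσ
  -- xL ∈ S r₀
  have hxLS : xL ∈ S r₀ := by
    rw [hSdef]
    refine ⟨hxLX, fun z hz => ?_⟩
    have hL : Filter.Tendsto (fun k =>
        (1 / 2) * ((xk (ρ k)) ⬝ᵥ (Qt *ᵥ (xk (ρ k)))) - (rk (ψ (ρ k))) * (ct ⬝ᵥ (xk (ρ k))))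
        Filter.atTop (nhds ((1 / 2) * (xL ⬝ᵥ (Qt *ᵥ xL)) - r₀ * (ct ⬝ᵥ xL))) := by
      exact (Filter.Tendsto.const_mul _ ((cont_quad.tendsto xL).comp hxσ)).sub
        (hrσ.mul (((cont_dot ct).tendsto xL).comp hxσ))
    have hRt : Filter.Tendsto (fun k =>
        (1 / 2) * (z ⬝ᵥ (Qt *ᵥ z)) - (rk (ψ (ρ k))) * (ct ⬝ᵥ z))
        Filter.atTop (nhds ((1 / 2) * (z ⬝ᵥ (Qt *ᵥ z)) - r₀ * (ct ⬝ᵥ z))) := by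
      exact tendsto_const_nhds.sub (hrσ.mul tendsto_const_nhds)
    refine le_of_tendsto_of_tendsto' hL hRt fun k => ?_
    have := hxkS (ρ k)
    rw [hSdef] at this
    exact this.2 z hz
  -- identify the limit
  have hFeq : ∀ k, F (rk (ψ (ρ k))) =
      (1 / 2) * (rk (ψ (ρ k)) - rprev) ^ 2 + c * h (xk (ρ k)) := by
    intro k
    simp only [hF]
    rw [hxkInf (ρ k)]
  have hlim : Filter.Tendsto (fun k =>
      (1 / 2) * (rk (ψ (ρ k)) - rprev) ^ 2 + c * h (xk (ρ k))) Filter.atTop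
      (nhds ((1 / 2) * (r₀ - rprev) ^ 2 + c * h xL)) := by
    exact (Filter.Tendsto.const_mul _ ((hrσ.sub tendsto_const_nhds).pow 2)).add
      (Filter.Tendsto.const_mul _ hhxσ)
  have hμeq : μ = (1 / 2) * (r₀ - rprev) ^ 2 + c * h xL :=
    tendsto_nhds_unique (hFσ.congr hFeq) hlim
  -- conclude
  have hFr₀ : F r₀ ≤ μ := by
    rw [hμeq, hF]
    have hle : sInf (h '' S r₀) ≤ h xL :=
      csInf_le (hbdd r₀) ⟨xL, hxLS, rfl⟩
    have := mul_le_mul_of_nonneg_left hle hc.le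
    linarith
  refine ⟨r₀, hr₀K, fun r hr => ?_⟩
  calc (1 / 2) * (r₀ - rprev) ^ 2 + (lam / Real.sqrt t) * sInf (h '' S r₀)
      = F r₀ := rfl
    _ ≤ μ := hFr₀
    _ ≤ F r := csInf_le hFimbdd ⟨r, hr, rfl⟩
    _ = (1 / 2) * (r - rprev) ^ 2 + (lam / Real.sqrt t) * sInf (h '' S r) := rfl
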